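/- If C is an admissible column, then ℓC ≤ C ≤ rC entrywise; moreover ℓC has the same barred part as C and rC has the same unbarred part as C. -/

import Mathlib

/-- The alphabet `[±n] = {1 < 2 < ⋯ < n < n̄ < ⋯ < 1̄}` is encoded as `{1, …, 2n} ⊆ ℕ`
with the usual order, the barred letter `ī` being encoded as `2n+1-i`. -/
def bar (n x : ℕ) : ℕ := 2 * n + 1 - x

/-- A column over `[±n]`: a strictly increasing list with entries in `{1, …, 2n}`. -/
def IsColumn (n : ℕ) (C : List ℕ) : Prop :=
  C.Chain' (· < ·) ∧ ∀ x ∈ C, 1 ≤ x ∧ x ≤ 2 * n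

/-- The one column condition (1CC): for every unbarred `i` with both `i` and `ī` in `C`,
the number of entries `x` with `x ≤ i` or `x ≥ ī` is at most `i`. -/
def OCC (n : ℕ) (C : List ℕ) : Prop :=
  ∀ i, 1 ≤ i → i ≤ n → i ∈ C → bar n i ∈ C →
    C.countP (fun x => decide (x ≤ i ∨ bar n i ≤ x)) ≤ i

/-- The set `I` of unbarred letters `z` such that both `z` and `z̄` occur in `C`,
listed in decreasing order `z₁ > z₂ > ⋯ > z_r`. -/
def Ilist (n : ℕ) (C : List ℕ) : List ℕ :=
  ((List.range (n + 1)).filter (fun z => decide (1 ≤ z ∧ z ∈ C ∧ bar n z ∈ C))).reverse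

/-- The greatest unbarred letter `t < bound` with `t ∉ C` and `t̄ ∉ C`, if any. -/
def pickBelow (n : ℕ) (C : List ℕ) (bound : ℕ) : Option ℕ :=
  ((List.range bound).filter (fun t => decide (1 ≤ t ∧ t ≤ n ∧ t ∉ C ∧ bar n t ∉ C))).max?

/-- The greedy construction of the set `J = {t₁ > ⋯ > t_r}` of Definition of splitting:
`t₁` is the greatest letter `< z₁` with `t₁, t̄₁ ∉ C` and `tᵢ` is the greatest letter
`< min (tᵢ₋₁, zᵢ)` with `tᵢ, t̄ᵢ ∉ C`; returns `none` if at some stage no letter exists. -/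
def splitJ (n : ℕ) (C : List ℕ) : List ℕ → ℕ → Option (List ℕ)
  | [], _ => some []
  | z :: zs, bound =>
    match pickBelow n C (min bound z) with
    | none => none
    | some t => (splitJ n C zs t).map (t :: ·)

def JlistOpt (n : ℕ) (C : List ℕ) : Option (List ℕ) := splitJ n C (Ilist n C) (n + 1)

/-- `C` can be split: the set `J` of the splitting definition exists. -/
def CanSplit (n : ℕ) (C : List ℕ) : Prop := (JlistOpt n C).isSome = true

/-- The set `J = {t₁ > ⋯ > t_r}` (empty if `C` cannot be split). -/
def Jlist (n : ℕ) (C : List ℕ) : List ℕ := (JlistOpt n C).getD []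

def sortCol (L : List ℕ) : List ℕ := L.mergeSort (· ≤ ·)

/-- The right column `rC`: replace each barred `z̄ᵢ` (for `zᵢ ∈ I`) by `t̄ᵢ` and reorder. -/
def rCol (n : ℕ) (C : List ℕ) : List ℕ :=
  sortCol ((C.filter (fun x => decide (x ∉ (Ilist n C).map (bar n)))) ++ (Jlist n C).map (bar n))

/-- The left column `ℓC`: replace each unbarred `zᵢ ∈ I` by `tᵢ` and reorder. -/
def lCol (n : ℕ) (C : List ℕ) : List ℕ :=
  sortCol ((C.filter (fun x => decide (x ∉ Ilist n C))) ++ Jlist n C)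

/-- `Φ(C)`: the column of the same size whose unbarred entries are taken from `ℓC`
and whose barred entries are taken from `rC`. -/
def PhiCol (n : ℕ) (C : List ℕ) : List ℕ :=
  sortCol ((lCol n C).filter (fun x => decide (x ≤ n)) ++
    (rCol n C).filter (fun x => decide (n < x)))

namespace ColSplit
open List

lemma bar_bar {n x : ℕ} (hx : x ≤ 2 * n + 1) : bar n (bar n x) = x := by simp [bar]; omega
lemma bar_lt_bar {n x y : ℕ} (hx : x ≤ 2 * n + 1) (h : y < x) : bar n x < bar n y := by
  simp [bar]; omega
lemma bar_le_bar {n x y : ℕ} (hx : x ≤ 2 * n + 1) (h : y ≤ x) : bar n x ≤ bar n y := by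
  simp [bar]; omega

lemma sortCol_perm (L : List ℕ) : sortCol L ~ L := mergeSort_perm L _

lemma eq_of_perm_of_sorted {α : Type*} {r : α → α → Prop} [Std.Antisymm r] {l₁ l₂ : List α}
    (hp : l₁ ~ l₂) (h1 : Pairwise r l₁) (h2 : Pairwise r l₂) : l₁ = l₂ :=
  hp.eq_of_pairwise' h1 h2

lemma sortCol_sorted (L : List ℕ) : Pairwise (· ≤ ·) (sortCol L) := by
  have h := pairwise_mergeSort (le := fun a b : ℕ => decide (a ≤ b))
    (by intro a b c h1 h2; simp at *; omega) (by intro a b; simp; omega) L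
  exact h.imp (by simp)

lemma sortCol_eq_of_perm {L₁ L₂ : List ℕ} (h : L₁ ~ L₂) : sortCol L₁ = sortCol L₂ :=
  eq_of_perm_of_sorted (((sortCol_perm L₁).trans h).trans (sortCol_perm L₂).symm)
    (sortCol_sorted L₁) (sortCol_sorted L₂)

lemma sortCol_eq_self {L : List ℕ} (h : Pairwise (· ≤ ·) L) : sortCol L = L :=
  eq_of_perm_of_sorted (sortCol_perm L) (sortCol_sorted L) h

lemma countP_mono_forall₂ {a b : List ℕ} (h : List.Forall₂ (· ≤ ·) a b) (v : ℕ) :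
    b.countP (fun x => decide (x ≤ v)) ≤ a.countP (fun x => decide (x ≤ v)) := by
  induction h with
  | nil => simp
  | @cons x y a b hxy _ ih =>
    rw [countP_cons, countP_cons]
    by_cases hy : y ≤ v
    · have hx : x ≤ v := le_trans hxy hy
      simp [hx, hy]; omega
    · simp [hy]; omega

lemma sorted_getElem_le_iff {L : List ℕ} (hL : Pairwise (· ≤ ·) L) {k v : ℕ} (hk : k < L.length) :
    L[k] ≤ v ↔ k < L.countP (fun x => decide (x ≤ v)) := by
  induction L generalizing k with
  | nil => simp at hk
  | cons x L ih =>
    rw [countP_cons]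
    rcases (pairwise_cons.mp hL) with ⟨hx, hL'⟩
    rcases k with _ | k
    · simp only [getElem_cons_zero]
      constructor
      · intro h; simp [h]
      · intro h
        by_contra hxv
        have h0 : countP (fun x => decide (x ≤ v)) L = 0 := by
          rw [countP_eq_zero]
          intro a ha
          simp only [decide_eq_true_eq]
          have := hx a ha; omega
        simp [hxv, h0] at h
    · simp only [getElem_cons_succ]
      have hk' : k < L.length := by simpa using hk
      rw [ih hL' hk']
      by_cases hxv : x ≤ v
      · simp [hxv]
      · have h0 : countP (fun x => decide (x ≤ v)) L = 0 := by
          rw [countP_eq_zero]; intro a ha; simp only [decide_eq_true_eq]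
          have := hx a ha; omega
        simp [hxv, h0]

lemma forall₂_sortCol {a b : List ℕ} (h : List.Forall₂ (· ≤ ·) a b) :
    List.Forall₂ (· ≤ ·) (sortCol a) (sortCol b) := by
  rw [forall₂_iff_get]
  have hlen : (sortCol a).length = (sortCol b).length := by
    rw [(sortCol_perm a).length_eq, (sortCol_perm b).length_eq, h.length_eq]
  refine ⟨hlen, fun i h1 h2 => ?_⟩
  simp only [get_eq_getElem]
  rw [sorted_getElem_le_iff (sortCol_sorted a) h1]
  have h3 : i < countP (fun x => decide (x ≤ (sortCol b)[i])) (sortCol b) := by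
    rw [← sorted_getElem_le_iff (sortCol_sorted b) h2]
  calc i < countP (fun x => decide (x ≤ (sortCol b)[i])) (sortCol b) := h3
    _ = countP _ b := (sortCol_perm b).countP_eq _
    _ ≤ countP _ a := countP_mono_forall₂ h _
    _ = _ := ((sortCol_perm a).countP_eq _).symm


open List

variable {n : ℕ} {C : List ℕ}

lemma mem_Ilist {z : ℕ} : z ∈ Ilist n C ↔ 1 ≤ z ∧ z ≤ n ∧ z ∈ C ∧ bar n z ∈ C := by
  simp only [Ilist, mem_reverse, mem_filter, mem_range, decide_eq_true_eq]
  constructor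
  · rintro ⟨h1, h2, h3, h4⟩; exact ⟨h2, by omega, h3, h4⟩
  · rintro ⟨h1, h2, h3, h4⟩; exact ⟨by omega, h1, h3, h4⟩

lemma Ilist_pairwise : (Ilist n C).Pairwise (· > ·) := by
  rw [Ilist, pairwise_reverse]
  exact Pairwise.filter _ pairwise_lt_range

lemma pickBelow_spec {b t : ℕ} (h : pickBelow n C b = some t) :
    t < b ∧ 1 ≤ t ∧ t ≤ n ∧ t ∉ C ∧ bar n t ∉ C ∧
      ∀ s, s < b → 1 ≤ s → s ≤ n → s ∉ C → bar n s ∉ C → s ≤ t := by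
  rw [pickBelow, max?_eq_some_iff'] at h
  obtain ⟨hmem, hmax⟩ := h
  simp only [mem_filter, mem_range, decide_eq_true_eq] at hmem
  refine ⟨hmem.1, hmem.2.1, hmem.2.2.1, hmem.2.2.2.1, hmem.2.2.2.2, fun s h1 h2 h3 h4 h5 => ?_⟩
  exact hmax s (by simp only [mem_filter, mem_range, decide_eq_true_eq]; exact ⟨h1, h2, h3, h4, h5⟩)

lemma splitJ_spec : ∀ {zs ts : List ℕ} {bound : ℕ}, splitJ n C zs bound = some ts →
    List.Forall₂ (fun t z => t < z ∧ 1 ≤ t ∧ t ≤ n ∧ t ∉ C ∧ bar n t ∉ C) ts zs ∧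
    ts.Pairwise (· > ·) ∧ ∀ t ∈ ts, t < bound := by
  intro zs
  induction zs with
  | nil => intro ts bound h; simp [splitJ] at h; subst h; simp
  | cons z zs ih =>
    intro ts bound h
    rw [splitJ] at h
    rcases hp : pickBelow n C (min bound z) with _ | t
    · rw [hp] at h; simp at h
    · rw [hp] at h
      have h' : (splitJ n C zs t).map (t :: ·) = some ts := h
      rcases hs : splitJ n C zs t with _ | ts'
      · rw [hs] at h'; simp at h'
      · rw [hs] at h'
        simp only [Option.map_some, Option.some.injEq] at h'
        subst h'
        obtain ⟨hf, hpw, hlt⟩ := ih hs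
        obtain ⟨ht1, ht2, ht3, ht4, ht5, _⟩ := pickBelow_spec hp
        refine ⟨Forall₂.cons ⟨by omega, ht2, ht3, ht4, ht5⟩ hf, ?_, ?_⟩
        · exact pairwise_cons.mpr ⟨fun t' ht' => hlt t' ht', hpw⟩
        · intro s hs'
          rw [mem_cons] at hs'
          rcases hs' with rfl | hs'
          · omega
          · have := hlt _ hs'; omega


def freeP (n : ℕ) (C : List ℕ) : ℕ → Bool := fun t => decide (1 ≤ t ∧ t ≤ n ∧ t ∉ C ∧ bar n t ∉ C)
def dblP (n : ℕ) (C : List ℕ) : ℕ → Bool := fun z => decide (1 ≤ z ∧ z ∈ C ∧ bar n z ∈ C)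
def Fcnt (n : ℕ) (C : List ℕ) (b : ℕ) : ℕ := (List.range b).countP (freeP n C)
def Dcnt (n : ℕ) (C : List ℕ) (b : ℕ) : ℕ := (List.range b).countP (dblP n C)

lemma countP_add_countP {α : Type*} (p q : α → Bool) (l : List α) :
    l.countP p + l.countP q
      = l.countP (fun x => p x || q x) + l.countP (fun x => p x && q x) := by
  induction l with
  | nil => simp
  | cons x l ih =>
    simp only [countP_cons]
    cases hp : p x <;> cases hq : q x <;> simp <;> omega

lemma countP_nodup_sub {L R : List ℕ} (hL : L.Nodup) (hR : R.Nodup)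
    (hsub : ∀ x ∈ L, x ∈ R) (p : ℕ → Bool) :
    L.countP p = R.countP (fun x => decide (x ∈ L) && p x) := by
  rw [countP_eq_length_filter, countP_eq_length_filter]
  refine Perm.length_eq ?_
  rw [perm_ext_iff_of_nodup (hL.filter _) (hR.filter _)]
  intro a
  simp only [mem_filter, Bool.and_eq_true, decide_eq_true_eq]
  constructor
  · rintro ⟨h1, h2⟩; exact ⟨hsub a h1, h1, h2⟩
  · rintro ⟨_, h1, h2⟩; exact ⟨h1, h2⟩

lemma countP_bar_inv {n : ℕ} (q : ℕ → Bool) :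
    (List.range (2*n+1)).countP (fun x => decide (1 ≤ x) && q x)
      = (List.range (2*n+1)).countP (fun y => decide (1 ≤ y) && q (bar n y)) := by
  rw [countP_eq_length_filter, countP_eq_length_filter]
  have hmap : ((List.range (2*n+1)).filter (fun x => decide (1 ≤ x) && q x)).map (bar n)
      ~ (List.range (2*n+1)).filter (fun y => decide (1 ≤ y) && q (bar n y)) := by
    rw [perm_ext_iff_of_nodup ?nd1 (nodup_range.filter _)]
    case nd1 =>
      refine Nodup.map_on ?_ (nodup_range.filter _)
      intro x hx y hy hxy
      simp only [mem_filter, mem_range] at hx hy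
      simp only [bar] at hxy
      omega
    intro a
    simp only [List.mem_map, mem_filter, mem_range, Bool.and_eq_true, decide_eq_true_eq]
    constructor
    · rintro ⟨x, ⟨hxR, hx1, hq⟩, rfl⟩
      have h1 : bar n x < 2*n+1 := by simp [bar]; omega
      have h2 : 1 ≤ bar n x := by simp [bar]; omega
      refine ⟨h1, h2, ?_⟩
      rw [bar_bar (by omega)]
      exact hq
    · rintro ⟨haR, ha1, hq⟩
      refine ⟨bar n a, ⟨?_, ?_, hq⟩, bar_bar (by omega)⟩
      · simp [bar]; omega
      · simp [bar]; omega
  calc _ = (((List.range (2*n+1)).filter (fun x => decide (1 ≤ x) && q x)).map (bar n)).length := by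
        rw [List.length_map]
    _ = _ := hmap.length_eq

lemma countP_range_restrict {m M : ℕ} (h : m ≤ M) (p : ℕ → Bool) :
    (List.range M).countP (fun x => decide (x < m) && p x) = (List.range m).countP p := by
  have hM : M = m + (M - m) := by omega
  rw [hM, range_add, countP_append, countP_map]
  have h1 : (List.range (M - m)).countP ((fun x => decide (x < m) && p x) ∘ (fun x => m + x)) = 0 := by
    rw [countP_eq_zero]
    intro a _
    simp
  rw [h1, Nat.add_zero]
  exact countP_congr (by intro x hx; simp only [mem_range] at hx; simp [hx])

lemma countP_range_one_le (z : ℕ) : (List.range (z+1)).countP (fun x => decide (1 ≤ x)) = z := by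
  induction z with
  | zero => simp
  | succ z ih => rw [range_succ, countP_append, ih]; simp

variable {n : ℕ} {C : List ℕ}

lemma Fcnt_mono {b b' : ℕ} (h : b ≤ b') : Fcnt n C b ≤ Fcnt n C b' :=
  Sublist.countP_le ((range_sublist).mpr h)

lemma Fcnt_succ (b : ℕ) : Fcnt n C (b+1) = Fcnt n C b + (if freeP n C b then 1 else 0) := by
  rw [Fcnt, Fcnt, range_succ, countP_append]; simp [countP_cons]

lemma pickBelow_eq_some_of_Fcnt {b : ℕ} (h : 1 ≤ Fcnt n C b) : ∃ t, pickBelow n C b = some t := by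
  rcases hp : pickBelow n C b with _ | t
  · rw [pickBelow, max?_eq_none_iff] at hp
    rw [Fcnt, countP_eq_length_filter] at h
    rw [show (fun t => decide (1 ≤ t ∧ t ≤ n ∧ t ∉ C ∧ bar n t ∉ C)) = freeP n C from rfl] at hp
    rw [hp] at h
    simp at h
  · exact ⟨t, rfl⟩

lemma Fcnt_of_pick {b t : ℕ} (h : pickBelow n C b = some t) : Fcnt n C b = Fcnt n C t + 1 := by
  obtain ⟨ht1, ht2, ht3, ht4, ht5, hmax⟩ := pickBelow_spec h
  have hb : b = (t+1) + (b - t - 1) := by omega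
  have h2 : Fcnt n C b = Fcnt n C (t+1) := by
    rw [Fcnt, Fcnt, hb, range_add, countP_append, countP_map]
    have h0 : (List.range (b - t - 1)).countP (freeP n C ∘ (fun x => t + 1 + x)) = 0 := by
      rw [countP_eq_zero]
      intro a ha
      simp only [mem_range] at ha
      simp only [Function.comp_apply, freeP, decide_eq_true_eq, not_and]
      intro q1 q2 q3 q4
      have := hmax (t+1+a) (by omega) q1 q2 q3 q4
      omega
    rw [h0, Nat.add_zero]
  rw [h2, Fcnt_succ]
  have : freeP n C t = true := by simp [freeP]; exact ⟨ht2, ht3, ht4, ht5⟩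
  simp [this]


lemma Dcnt_le_Fcnt (hC : IsColumn n C) (hadm : OCC n C) {z : ℕ}
    (h1 : 1 ≤ z) (h2 : z ≤ n) (h3 : z ∈ C) (h4 : bar n z ∈ C) :
    Dcnt n C (z+1) ≤ Fcnt n C (z+1) := by
  obtain ⟨hch, hbd⟩ := hC
  have hndC : C.Nodup := (isChain_iff_pairwise.mp hch).nodup
  set R := List.range (2*n+1) with hR
  have hmemR : ∀ x ∈ C, x ∈ R := fun x hx => by
    rw [hR, mem_range]; have := hbd x hx; omega
  have hRrange : ∀ x ∈ R, x < 2*n+1 := fun x hx => by rwa [hR, mem_range] at hx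
  set pA := fun x => decide (1 ≤ x ∧ x ≤ z ∧ x ∈ C) with hpA
  set pB := fun x => decide (1 ≤ x ∧ x ≤ z ∧ bar n x ∈ C) with hpB
  set pU := fun x => decide (1 ≤ x ∧ x ≤ z ∧ (x ∈ C ∨ bar n x ∈ C)) with hpU
  set pD := fun x => decide (1 ≤ x ∧ x ≤ z ∧ x ∈ C ∧ bar n x ∈ C) with hpD
  set pF := fun x => decide (1 ≤ x ∧ x ≤ z ∧ x ∉ C ∧ bar n x ∉ C) with hpF
  -- (1) A + B = U + D
  have hAB : R.countP pA + R.countP pB = R.countP pU + R.countP pD := by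
    rw [countP_add_countP pA pB]
    congr 1
    · refine countP_congr fun x _ => ?_
      rw [hpA, hpB, hpU]; simp only [Bool.or_eq_true, decide_eq_true_eq]; tauto
    · refine countP_congr fun x _ => ?_
      rw [hpA, hpB, hpD]; simp only [Bool.and_eq_true, decide_eq_true_eq]; tauto
  -- (2) U + F = z
  have hUF : R.countP pU + R.countP pF = z := by
    rw [countP_add_countP pU pF]
    have e1 : R.countP (fun x => pU x || pF x) = z := by
      have e2 : R.countP (fun x => pU x || pF x)
          = R.countP (fun x => decide (x < z + 1) && decide (1 ≤ x)) := by
        refine countP_congr fun x _ => ?_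
        rw [hpU, hpF]
        simp only [Bool.or_eq_true, Bool.and_eq_true, decide_eq_true_eq]
        constructor
        · rintro (⟨a, b, _⟩ | ⟨a, b, _⟩) <;> exact ⟨by omega, a⟩
        · rintro ⟨hxz, hx1⟩
          by_cases hc : x ∈ C <;> by_cases hbc : bar n x ∈ C
          · exact Or.inl ⟨hx1, by omega, Or.inl hc⟩
          · exact Or.inl ⟨hx1, by omega, Or.inl hc⟩
          · exact Or.inl ⟨hx1, by omega, Or.inr hbc⟩
          · exact Or.inr ⟨hx1, by omega, hc, hbc⟩
      rw [e2, hR, countP_range_restrict (by omega), countP_range_one_le]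
    have e3 : R.countP (fun x => pU x && pF x) = 0 := by
      rw [countP_eq_zero]
      intro a _
      rw [hpU, hpF]
      simp only [Bool.and_eq_true, decide_eq_true_eq]
      rintro ⟨⟨-, -, hc | hbc⟩, -, -, hnc, hnbc⟩ <;> tauto
    rw [e1, e3, Nat.add_zero]
  -- (3) the 1CC count equals A + B
  have hcnt : C.countP (fun x => decide (x ≤ z ∨ bar n z ≤ x)) = R.countP pA + R.countP pB := by
    rw [countP_nodup_sub hndC (by rw [hR]; exact nodup_range) hmemR]
    set pA' := fun x => decide (x ∈ C ∧ x ≤ z) with hpA'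
    set pB' := fun x => decide (x ∈ C ∧ bar n z ≤ x) with hpB'
    have e0 : R.countP (fun x => decide (x ∈ C) && decide (x ≤ z ∨ bar n z ≤ x))
        = R.countP (fun x => pA' x || pB' x) := by
      refine countP_congr fun x _ => ?_
      rw [hpA', hpB']
      simp only [Bool.and_eq_true, Bool.or_eq_true, decide_eq_true_eq]; tauto
    have e1 : R.countP (fun x => pA' x && pB' x) = 0 := by
      rw [countP_eq_zero]
      intro a _
      rw [hpA', hpB']
      simp only [Bool.and_eq_true, decide_eq_true_eq]
      rintro ⟨⟨-, haz⟩, -, hba⟩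
      simp only [bar] at hba
      omega
    have e2 : R.countP (fun x => pA' x || pB' x) = R.countP pA' + R.countP pB' := by
      have := countP_add_countP pA' pB' R
      omega
    have e3 : R.countP pA' = R.countP pA := by
      refine countP_congr fun x hx => ?_
      rw [hpA', hpA]
      simp only [decide_eq_true_eq]
      constructor
      · rintro ⟨hc, hz⟩; exact ⟨(hbd x hc).1, hz, hc⟩
      · rintro ⟨_, hz, hc⟩; exact ⟨hc, hz⟩
    have e4 : R.countP pB' = R.countP pB := by
      have i1 : R.countP pB' = R.countP (fun x => decide (1 ≤ x) && decide (x ∈ C ∧ bar n z ≤ x)) := by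
        refine countP_congr fun x _ => ?_
        rw [hpB']
        simp only [Bool.and_eq_true, decide_eq_true_eq]
        constructor
        · rintro ⟨hc, hz⟩; exact ⟨(hbd x hc).1, hc, hz⟩
        · rintro ⟨_, hc, hz⟩; exact ⟨hc, hz⟩
      have i2 := countP_bar_inv (n := n) (fun x => decide (x ∈ C ∧ bar n z ≤ x))
      rw [hR] at i1 ⊢
      rw [i1, i2]
      refine countP_congr fun y hy => ?_
      rw [hpB]
      have hy' : y < 2*n+1 := by rwa [mem_range] at hy
      simp only [Bool.and_eq_true, decide_eq_true_eq]
      simp only [bar]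
      constructor
      · rintro ⟨hy1, hbc, hzz⟩; exact ⟨hy1, by omega, hbc⟩
      · rintro ⟨hy1, hyz, hbc⟩; exact ⟨hy1, hbc, by omega⟩
    rw [e0, e2, e3, e4]
  -- (4) conclude D ≤ F
  have hocc := hadm z h1 h2 h3 h4
  have hDF : R.countP pD ≤ R.countP pF := by omega
  -- (5) identify D and F
  have eD : R.countP pD = Dcnt n C (z+1) := by
    have : R.countP pD = R.countP (fun x => decide (x < z+1) && dblP n C x) := by
      refine countP_congr fun x _ => ?_
      rw [hpD]
      simp only [Bool.and_eq_true, decide_eq_true_eq, dblP]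
      constructor
      · rintro ⟨a, b, c, d⟩; exact ⟨by omega, a, c, d⟩
      · rintro ⟨a, b1, b2, b3⟩; exact ⟨b1, by omega, b2, b3⟩
    rw [this, hR, countP_range_restrict (by omega)]; rfl
  have eF : R.countP pF = Fcnt n C (z+1) := by
    have : R.countP pF = R.countP (fun x => decide (x < z+1) && freeP n C x) := by
      refine countP_congr fun x _ => ?_
      rw [hpF]
      simp only [Bool.and_eq_true, decide_eq_true_eq, freeP]
      constructor
      · rintro ⟨a, b, c, d⟩; exact ⟨by omega, a, by omega, c, d⟩
      · rintro ⟨a, b1, b2, b3, b4⟩; exact ⟨b1, by omega, b3, b4⟩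
    rw [this, hR, countP_range_restrict (by omega)]; rfl
  rw [← eD, ← eF]
  exact hDF


lemma dbl_length_le {z : ℕ} {zs : List ℕ} (hpw : (z :: zs).Pairwise (· > ·))
    (hmem : ∀ w ∈ z :: zs, 1 ≤ w ∧ w ≤ n ∧ w ∈ C ∧ bar n w ∈ C) :
    (z :: zs).length ≤ Dcnt n C (z+1) := by
  have hnd : (z :: zs).Nodup := hpw.imp (fun h => ne_of_gt h)
  have hsub : ∀ w ∈ z :: zs, w ∈ (List.range (z+1)).filter (dblP n C) := by
    intro w hw
    obtain ⟨w1, w2, w3, w4⟩ := hmem w hw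
    rw [mem_filter, mem_range]
    have hwz : w ≤ z := by
      rcases mem_cons.mp hw with rfl | hw'
      · exact le_refl w
      · exact le_of_lt ((pairwise_cons.mp hpw).1 w hw')
    exact ⟨by omega, by simp [dblP]; exact ⟨w1, w3, w4⟩⟩
  calc (z :: zs).length ≤ ((List.range (z+1)).filter (dblP n C)).length :=
        (hnd.subperm hsub).length_le
    _ = Dcnt n C (z+1) := countP_eq_length_filter.symm

lemma len_le_Fcnt_head (hC : IsColumn n C) (hadm : OCC n C) {z : ℕ} {zs : List ℕ}
    (hpw : (z :: zs).Pairwise (· > ·))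
    (hmem : ∀ w ∈ z :: zs, 1 ≤ w ∧ w ≤ n ∧ w ∈ C ∧ bar n w ∈ C) :
    (z :: zs).length ≤ Fcnt n C z := by
  obtain ⟨h1, h2, h3, h4⟩ := hmem z (mem_cons_self)
  have e1 := dbl_length_le hpw hmem
  have e2 := Dcnt_le_Fcnt hC hadm h1 h2 h3 h4
  have e3 : Fcnt n C (z+1) = Fcnt n C z + (if freeP n C z then 1 else 0) := Fcnt_succ z
  have e4 : freeP n C z = false := by
    simp only [freeP, decide_eq_false_iff_not, not_and]
    intro _ _ h
    exact absurd h3 h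
  rw [e4] at e3
  simp at e3
  omega

lemma splitJ_isSome (hC : IsColumn n C) (hadm : OCC n C) :
    ∀ (zs : List ℕ) (bound : ℕ), zs.Pairwise (· > ·) →
    (∀ z ∈ zs, 1 ≤ z ∧ z ≤ n ∧ z ∈ C ∧ bar n z ∈ C) →
    (∀ z zs', zs = z :: zs' → zs.length ≤ Fcnt n C (min bound z)) →
    (splitJ n C zs bound).isSome = true := by
  intro zs
  induction zs with
  | nil => intro bound _ _ _; rfl
  | cons z zs ih =>
    intro bound hpw hmem hlen
    have h1 : 1 ≤ Fcnt n C (min bound z) := by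
      have := hlen z zs rfl
      simp only [length_cons] at this
      omega
    obtain ⟨t, hp⟩ := pickBelow_eq_some_of_Fcnt h1
    rw [splitJ, hp]
    have : ((splitJ n C zs t).map (t :: ·)).isSome = (splitJ n C zs t).isSome := by
      rcases splitJ n C zs t with _ | l <;> rfl
    rw [this]
    refine ih t hpw.of_cons (fun w hw => hmem w (mem_cons_of_mem _ hw)) ?_
    rintro z' zs'' rfl
    have hFt : (z' :: zs'').length ≤ Fcnt n C t := by
      have q1 := hlen z (z' :: zs'') rfl
      have q2 := Fcnt_of_pick hp
      simp only [length_cons] at q1 ⊢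
      omega
    rcases le_or_gt t z' with h | h
    · rw [min_eq_left h]
      exact hFt
    · rw [min_eq_right (le_of_lt h)]
      exact len_le_Fcnt_head hC hadm hpw.of_cons
        (fun w hw => hmem w (mem_cons_of_mem _ hw))

lemma canSplit (hC : IsColumn n C) (hadm : OCC n C) : CanSplit n C := by
  rw [CanSplit, JlistOpt]
  refine splitJ_isSome hC hadm _ _ Ilist_pairwise (fun z hz => mem_Ilist.mp hz) ?_
  rintro z zs' heq
  have hz : z ∈ Ilist n C := by rw [heq]; exact mem_cons_self
  rw [mem_Ilist] at hz
  rw [min_eq_right (by omega)]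
  rw [heq]
  exact len_le_Fcnt_head hC hadm (heq ▸ Ilist_pairwise)
    (fun w hw => mem_Ilist.mp (heq ▸ hw))


lemma Jlist_spec (hC : IsColumn n C) (hadm : OCC n C) :
    List.Forall₂ (fun t z => t < z ∧ 1 ≤ t ∧ t ≤ n ∧ t ∉ C ∧ bar n t ∉ C)
      (Jlist n C) (Ilist n C) ∧ (Jlist n C).Pairwise (· > ·) := by
  have h := canSplit hC hadm
  rw [CanSplit] at h
  obtain ⟨ts, hts⟩ := Option.isSome_iff_exists.mp h
  have hJ : Jlist n C = ts := by rw [Jlist, hts]; rfl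
  obtain ⟨a, b, _⟩ := splitJ_spec (n := n) (C := C) (hts)
  rw [hJ]; exact ⟨a, b⟩

lemma forall₂_enrich {α β : Type*} {R : α → β → Prop} {p : β → Prop} :
    ∀ {l₁ : List α} {l₂ : List β}, List.Forall₂ R l₁ l₂ → (∀ b ∈ l₂, p b) →
      List.Forall₂ (fun a b => R a b ∧ p b) l₁ l₂ := by
  intro l₁ l₂ h hp
  induction h with
  | nil => exact Forall₂.nil
  | @cons a b l₁ l₂ hab _ ih =>
    exact Forall₂.cons ⟨hab, hp b (mem_cons_self)⟩
      (ih (fun b hb => hp b (mem_cons_of_mem _ hb)))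

lemma forall₂_append' {α β : Type*} {R : α → β → Prop} :
    ∀ {a c : List α} {b d : List β}, List.Forall₂ R a b → List.Forall₂ R c d →
      List.Forall₂ R (a ++ c) (b ++ d) := by
  intro a c b d h1 h2
  induction h1 with
  | nil => exact h2
  | cons hab _ ih => exact Forall₂.cons hab ih


lemma forall₂_mem_left {α β : Type*} {R : α → β → Prop} :
    ∀ {l₁ : List α} {l₂ : List β}, List.Forall₂ R l₁ l₂ → ∀ x ∈ l₁, ∃ y ∈ l₂, R x y := by
  intro l₁ l₂ h
  induction h with
  | nil => intro x hx; simp at hx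
  | @cons a b l₁ l₂ hab _ ih =>
    intro x hx
    rcases mem_cons.mp hx with rfl | hx'
    · exact ⟨b, mem_cons_self, hab⟩
    · obtain ⟨y, hy, hxy⟩ := ih x hx'
      exact ⟨y, mem_cons_of_mem _ hy, hxy⟩

theorem main_thm (n : ℕ) (C : List ℕ) (hC : IsColumn n C) (hadm : OCC n C) :
    List.Forall₂ (· ≤ ·) (lCol n C) C ∧ List.Forall₂ (· ≤ ·) C (rCol n C) ∧
    (lCol n C).filter (fun x => decide (n < x)) = C.filter (fun x => decide (n < x)) ∧
    (rCol n C).filter (fun x => decide (x ≤ n)) = C.filter (fun x => decide (x ≤ n)) := by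
  obtain ⟨hrel, hJpw⟩ := Jlist_spec hC hadm
  obtain ⟨hch, hbd⟩ := hC
  have pairC : C.Pairwise (· < ·) := isChain_iff_pairwise.mp hch
  have nodupC : C.Nodup := pairC.imp ne_of_lt
  have sortedC : Pairwise (· ≤ ·) C := pairC.imp le_of_lt
  have hILpw : (Ilist n C).Pairwise (· > ·) := Ilist_pairwise
  have hILmem : ∀ z ∈ Ilist n C, 1 ≤ z ∧ z ≤ n ∧ z ∈ C ∧ bar n z ∈ C :=
    fun z hz => mem_Ilist.mp hz
  have hJLmem : ∀ t ∈ Jlist n C, 1 ≤ t ∧ t ≤ n := by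
    intro t ht
    obtain ⟨z, _, h⟩ := forall₂_mem_left hrel t ht
    exact ⟨h.2.1, h.2.2.1⟩
  set IL := Ilist n C with hIL
  set JL := Jlist n C with hJL
  set BI := IL.map (bar n) with hBI
  set BJ := JL.map (bar n) with hBJ
  have hBImem : ∀ x ∈ BI, n+1 ≤ x ∧ x ≤ 2*n ∧ x ∈ C := by
    intro x hx
    obtain ⟨z, hz, rfl⟩ := mem_map.mp hx
    obtain ⟨z1, z2, _, z4⟩ := hILmem z hz
    exact ⟨by simp [bar]; omega, by simp [bar]; omega, z4⟩
  have hBJmem : ∀ x ∈ BJ, n+1 ≤ x := by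
    intro x hx
    obtain ⟨t, ht, rfl⟩ := mem_map.mp hx
    obtain ⟨t1, t2⟩ := hJLmem t ht
    simp [bar]; omega
  have hBIpw : BI.Pairwise (· < ·) := by
    rw [hBI, pairwise_map]
    refine hILpw.imp_of_mem ?_
    intro a b ha hb h
    exact bar_lt_bar (by have := (hILmem a ha).2.1; omega) h
  have hBJpw : BJ.Pairwise (· < ·) := by
    rw [hBJ, pairwise_map]
    refine hJpw.imp_of_mem ?_
    intro a b ha hb h
    exact bar_lt_bar (by have := (hJLmem a ha).2; omega) h
  have hJI_le : List.Forall₂ (· ≤ ·) JL IL := hrel.imp (fun _ _ h => le_of_lt h.1)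
  have hBIJ : List.Forall₂ (· ≤ ·) BI BJ := by
    rw [hBI, hBJ, forall₂_map_left_iff, forall₂_map_right_iff]
    apply Forall₂.flip
    refine (forall₂_enrich hrel (fun z hz => (hILmem z hz).2.1)).imp ?_
    rintro t z ⟨⟨h1, -, -, -, -⟩, hzn⟩
    exact bar_le_bar (by omega) (le_of_lt h1)
  -- right column
  have eqBI : C.filter (fun x => decide (x ∈ BI)) = BI := by
    apply eq_of_perm_of_sorted (r := (· ≤ ·))
    · rw [perm_ext_iff_of_nodup (nodupC.filter _) (hBIpw.imp ne_of_lt)]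
      intro a
      simp only [mem_filter, decide_eq_true_eq]
      exact ⟨fun h => h.2, fun h => ⟨(hBImem a h).2.2, h⟩⟩
    · exact (Pairwise.filter _ pairC).imp le_of_lt
    · exact hBIpw.imp le_of_lt
  have permr : C.filter (fun x => decide (x ∉ BI)) ++ BI ~ C := by
    have h0 := filter_append_perm (fun x => decide (x ∉ BI)) C
    have h1 : C.filter (fun x => !decide (x ∉ BI)) = C.filter (fun x => decide (x ∈ BI)) :=
      filter_congr (by intro x _; simp)
    rw [h1, eqBI] at h0
    exact h0
  have hCr : sortCol (C.filter (fun x => decide (x ∉ BI)) ++ BI) = C := by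
    rw [sortCol_eq_of_perm permr, sortCol_eq_self sortedC]
  have hrCol : rCol n C = sortCol (C.filter (fun x => decide (x ∉ BI)) ++ BJ) := rfl
  have hCle_r : List.Forall₂ (· ≤ ·) C (rCol n C) := by
    have h2 : List.Forall₂ (· ≤ ·) (C.filter (fun x => decide (x ∉ BI)) ++ BI)
        (C.filter (fun x => decide (x ∉ BI)) ++ BJ) :=
      forall₂_append' (forall₂_same.mpr (fun x _ => le_refl x)) hBIJ
    have h3 := forall₂_sortCol h2
    rw [hCr] at h3
    rw [hrCol]
    exact h3
  -- left column
  have eqIL : C.filter (fun x => decide (x ∈ IL)) = IL.reverse := by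
    apply eq_of_perm_of_sorted (r := (· ≤ ·))
    · rw [perm_ext_iff_of_nodup (nodupC.filter _)
        (nodup_reverse.mpr (hILpw.imp (fun h => ne_of_gt h)))]
      intro a
      simp only [mem_filter, decide_eq_true_eq, mem_reverse]
      exact ⟨fun h => h.2, fun h => ⟨(hILmem a h).2.2.1, h⟩⟩
    · exact (Pairwise.filter _ pairC).imp le_of_lt
    · exact (pairwise_reverse.mpr hILpw).imp le_of_lt
  have perml : C.filter (fun x => decide (x ∉ IL)) ++ IL.reverse ~ C := by
    have h0 := filter_append_perm (fun x => decide (x ∉ IL)) C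
    have h1 : C.filter (fun x => !decide (x ∉ IL)) = C.filter (fun x => decide (x ∈ IL)) :=
      filter_congr (by intro x _; simp)
    rw [h1, eqIL] at h0
    exact h0
  have hCl : sortCol (C.filter (fun x => decide (x ∉ IL)) ++ IL.reverse) = C := by
    rw [sortCol_eq_of_perm perml, sortCol_eq_self sortedC]
  have hlCol : lCol n C = sortCol (C.filter (fun x => decide (x ∉ IL)) ++ JL) := rfl
  have hlCol2 : lCol n C = sortCol (C.filter (fun x => decide (x ∉ IL)) ++ JL.reverse) := by
    rw [hlCol]
    exact sortCol_eq_of_perm (Perm.append_left _ (reverse_perm JL).symm)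
  have hlle : List.Forall₂ (· ≤ ·) (lCol n C) C := by
    have h2 : List.Forall₂ (· ≤ ·) (C.filter (fun x => decide (x ∉ IL)) ++ JL.reverse)
        (C.filter (fun x => decide (x ∉ IL)) ++ IL.reverse) :=
      forall₂_append' (forall₂_same.mpr (fun x _ => le_refl x))
        (forall₂_reverse_iff.mpr hJI_le)
    have h3 := forall₂_sortCol h2
    rw [hCl] at h3
    rw [hlCol2]
    exact h3
  -- filter equalities
  have hfl : (lCol n C).filter (fun x => decide (n < x)) = C.filter (fun x => decide (n < x)) := by
    apply eq_of_perm_of_sorted (r := (· ≤ ·))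
    · calc (lCol n C).filter (fun x => decide (n < x))
          ~ ((C.filter (fun x => decide (x ∉ IL)) ++ JL).filter (fun x => decide (n < x))) := by
            rw [hlCol]; exact (sortCol_perm _).filter _
        _ = C.filter (fun x => decide (n < x)) := by
            rw [filter_append]
            have e1 : JL.filter (fun x => decide (n < x)) = [] := by
              rw [filter_eq_nil_iff]
              intro t ht
              have := (hJLmem t ht).2
              simp; omega
            have e2 : (C.filter (fun x => decide (x ∉ IL))).filter (fun x => decide (n < x))
                = C.filter (fun x => decide (n < x)) := by
              rw [filter_filter]
              refine filter_congr ?_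
              intro x hx
              by_cases hn : n < x
              · have hxIL : x ∉ IL := fun hmem => by have := (hILmem x hmem).2.1; omega
                simp [hn, hxIL]
              · simp [hn]
            rw [e1, e2, append_nil]
    · exact (Pairwise.filter _ (sortCol_sorted _)).imp (fun h => h)
    · exact (Pairwise.filter _ pairC).imp le_of_lt
  have hfr : (rCol n C).filter (fun x => decide (x ≤ n)) = C.filter (fun x => decide (x ≤ n)) := by
    apply eq_of_perm_of_sorted (r := (· ≤ ·))
    · calc (rCol n C).filter (fun x => decide (x ≤ n))
          ~ ((C.filter (fun x => decide (x ∉ BI)) ++ BJ).filter (fun x => decide (x ≤ n))) := by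
            rw [hrCol]; exact (sortCol_perm _).filter _
        _ = C.filter (fun x => decide (x ≤ n)) := by
            rw [filter_append]
            have e1 : BJ.filter (fun x => decide (x ≤ n)) = [] := by
              rw [filter_eq_nil_iff]
              intro t ht
              have := hBJmem t ht
              simp; omega
            have e2 : (C.filter (fun x => decide (x ∉ BI))).filter (fun x => decide (x ≤ n))
                = C.filter (fun x => decide (x ≤ n)) := by
              rw [filter_filter]
              refine filter_congr ?_
              intro x hx
              by_cases hn : x ≤ n
              · have hxBI : x ∉ BI := fun hmem => by have := (hBImem x hmem).1; omega
                simp [hn, hxBI]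
              · simp [hn]
            rw [e1, e2, append_nil]
    · exact (Pairwise.filter _ (sortCol_sorted _)).imp (fun h => h)
    · exact (Pairwise.filter _ pairC).imp le_of_lt
  exact ⟨hlle, hCle_r, hfl, hfr⟩

end ColSplit

/-- if `C` is admissible then `ℓC ≤ C ≤ rC` entrywise, `ℓC` has the same
barred part as `C` and `rC` has the same unbarred part as `C`. -/
theorem lCol_le_le_rCol (n : ℕ) (C : List ℕ) (hC : IsColumn n C) (hadm : OCC n C) :
    List.Forall₂ (· ≤ ·) (lCol n C) C ∧ List.Forall₂ (· ≤ ·) C (rCol n C) ∧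
    (lCol n C).filter (fun x => decide (n < x)) = C.filter (fun x => decide (n < x)) ∧
    (rCol n C).filter (fun x => decide (x ≤ n)) = C.filter (fun x => decide (x ≤ n)) :=
  ColSplit.main_thm n C hC hadm
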